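/- For matroids M₁ on E₁ and M₂ on E₂ with E₁ ∩ E₂ = ∅, the CI-structure of the direct sum satisfies [[M₁ ⊕ M₂]] = [[M₁]] ⊕ [[M₂]], where G₁ ⊕ G₂ consists of all (ij|K) ∈ A_{E₁∪E₂} such that either i ∈ E₁ and j ∈ E₂ (or vice versa), or {i,j} ⊆ E₁ and (ij|K ∩ E₁) ∈ G₁, or {i,j} ⊆ E₂ and (ij|K ∩ E₂) ∈ G₂. -/

import Mathlib

open Finset

/-- A matroid on a finite ground set `E`, given by its rank function. -/
structure FinMatroid (α : Type*) [DecidableEq α] where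
  E : Finset α
  r : Finset α → ℕ
  r_empty : r ∅ = 0
  r_le_card : ∀ ⦃A⦄, A ⊆ E → r A ≤ A.card
  r_mono : ∀ ⦃A B : Finset α⦄, A ⊆ B → B ⊆ E → r A ≤ r B
  r_submod : ∀ ⦃A B : Finset α⦄, A ⊆ E → B ⊆ E → r (A ∪ B) + r (A ∩ B) ≤ r A + r B

namespace FinMatroid

variable {α : Type*} [DecidableEq α]

/-- A set is independent if it is subcardinal-tight for the rank function. -/
def Indep (M : FinMatroid α) (S : Finset α) : Prop := S ⊆ M.E ∧ M.r S = S.card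

/-- A circuit is a minimal dependent set. -/
def Circuit (M : FinMatroid α) (C : Finset α) : Prop :=
  C ⊆ M.E ∧ M.r C < C.card ∧ ∀ S, S ⊂ C → M.r S = S.card

/-- `B` is a basis of `S` if it is a maximal independent subset of `S`. -/
def BasisOf (M : FinMatroid α) (B S : Finset α) : Prop :=
  B ⊆ S ∧ M.Indep B ∧ ∀ x ∈ S, x ∉ B → ¬ M.Indep (insert x B)

/-- The conditional independence statement `(ij|K)` holds in `M`:
`r(iK) + r(jK) = r(ijK) + r(K)`. -/
def CI (M : FinMatroid α) (i j : α) (K : Finset α) : Prop :=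
  M.r (insert i K) + M.r (insert j K) = M.r (insert i (insert j K)) + M.r K

/-- A matroid is loopless if every singleton of the ground set is independent. -/
def Loopless (M : FinMatroid α) : Prop := ∀ e ∈ M.E, M.r {e} = 1

end FinMatroid

/-- Well-formedness of a CI-statement `(ij|K)` on ground set `E`. -/
def wfCI {α : Type*} [DecidableEq α] (E : Finset α) (i j : α) (K : Finset α) : Prop :=
  i ∈ E ∧ j ∈ E ∧ i ≠ j ∧ i ∉ K ∧ j ∉ K ∧ K ⊆ E

/-- The CI-structure `[[M]]` of a matroid, as a predicate on CI-statements. -/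
def FinMatroid.ciOf {α : Type*} [DecidableEq α] (M : FinMatroid α) :
    α → α → Finset α → Prop :=
  fun i j K => wfCI M.E i j K ∧ M.CI i j K

/-- Direct sum of two matroids on disjoint ground sets, with rank function
`S ↦ r₁(S ∩ E₁) + r₂(S ∩ E₂)`. -/
def FinMatroid.directSum {α : Type*} [DecidableEq α] (M₁ M₂ : FinMatroid α)
    (h : Disjoint M₁.E M₂.E) : FinMatroid α where
  E := M₁.E ∪ M₂.E
  r S := M₁.r (S ∩ M₁.E) + M₂.r (S ∩ M₂.E)
  r_empty := by simp [M₁.r_empty, M₂.r_empty]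
  r_le_card := by
    intro S hS
    try dsimp only
    have h1 : M₁.r (S ∩ M₁.E) ≤ (S ∩ M₁.E).card := M₁.r_le_card inter_subset_right
    have h2 : M₂.r (S ∩ M₂.E) ≤ (S ∩ M₂.E).card := M₂.r_le_card inter_subset_right
    have hd : Disjoint (S ∩ M₁.E) (S ∩ M₂.E) :=
      h.mono inter_subset_right inter_subset_right
    have h3 : (S ∩ M₁.E) ∪ (S ∩ M₂.E) = S := by
      ext x
      simp only [mem_union, mem_inter]
      have hx : x ∈ S → x ∈ M₁.E ∪ M₂.E := fun hxS => hS hxS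
      simp only [mem_union] at hx
      tauto
    have h4 := card_union_of_disjoint hd
    rw [h3] at h4
    omega
  r_mono := by
    intro S T hST hT
    try dsimp only
    exact Nat.add_le_add
      (M₁.r_mono (inter_subset_inter hST (Finset.Subset.refl _)) inter_subset_right)
      (M₂.r_mono (inter_subset_inter hST (Finset.Subset.refl _)) inter_subset_right)
  r_submod := by
    intro S T hS hT
    try dsimp only
    have k1 : (S ∪ T) ∩ M₁.E = (S ∩ M₁.E) ∪ (T ∩ M₁.E) := by
      ext x; simp only [mem_union, mem_inter]; tauto
    have k2 : (S ∩ T) ∩ M₁.E = (S ∩ M₁.E) ∩ (T ∩ M₁.E) := by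
      ext x; simp only [mem_inter]; tauto
    have k3 : (S ∪ T) ∩ M₂.E = (S ∩ M₂.E) ∪ (T ∩ M₂.E) := by
      ext x; simp only [mem_union, mem_inter]; tauto
    have k4 : (S ∩ T) ∩ M₂.E = (S ∩ M₂.E) ∩ (T ∩ M₂.E) := by
      ext x; simp only [mem_inter]; tauto
    have h1 := M₁.r_submod (A := S ∩ M₁.E) (B := T ∩ M₁.E)
      inter_subset_right inter_subset_right
    have h2 := M₂.r_submod (A := S ∩ M₂.E) (B := T ∩ M₂.E)
      inter_subset_right inter_subset_right
    rw [k1, k2, k3, k4]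
    omega

/-- `[[M₁ ⊕ M₂]] = [[M₁]] ⊕ [[M₂]]`: a CI-statement `(ij|K)`
belongs to the CI-structure of the direct sum iff it is well-formed on
`E₁ ∪ E₂` and either `i, j` lie in different summands, or both lie in `E₁`
and `(ij|K ∩ E₁) ∈ [[M₁]]`, or both lie in `E₂` and `(ij|K ∩ E₂) ∈ [[M₂]]`. -/
theorem ci_directSum {α : Type*} [DecidableEq α] (M₁ M₂ : FinMatroid α)
    (h : Disjoint M₁.E M₂.E) :
    ∀ (i j : α) (K : Finset α),
      (M₁.directSum M₂ h).ciOf i j K ↔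
        (wfCI (M₁.E ∪ M₂.E) i j K ∧
          ((i ∈ M₁.E ∧ j ∈ M₂.E) ∨ (i ∈ M₂.E ∧ j ∈ M₁.E) ∨
            (i ∈ M₁.E ∧ j ∈ M₁.E ∧ M₁.ciOf i j (K ∩ M₁.E)) ∨
            (i ∈ M₂.E ∧ j ∈ M₂.E ∧ M₂.ciOf i j (K ∩ M₂.E)))) := by
  intro i j K
  have hd1 : ∀ x, x ∈ M₁.E → x ∉ M₂.E := fun x hx => Finset.disjoint_left.mp h hx
  have hd2 : ∀ x, x ∈ M₂.E → x ∉ M₁.E := fun x hx => Finset.disjoint_right.mp h hx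
  constructor
  · rintro ⟨⟨hi, hj, hij, hiK, hjK, hK⟩, hci⟩
    refine ⟨⟨hi, hj, hij, hiK, hjK, hK⟩, ?_⟩
    simp only [FinMatroid.directSum, mem_union] at hi hj
    simp only [FinMatroid.CI, FinMatroid.directSum] at hci
    rcases hi with hi1 | hi2 <;> rcases hj with hj1 | hj2
    · -- both in E₁
      rw [Finset.insert_inter_of_mem hi1, Finset.insert_inter_of_notMem (hd1 i hi1),
          Finset.insert_inter_of_mem hj1, Finset.insert_inter_of_notMem (hd1 j hj1),
          Finset.insert_inter_of_mem hi1, Finset.insert_inter_of_mem hj1,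
          Finset.insert_inter_of_notMem (hd1 i hi1),
          Finset.insert_inter_of_notMem (hd1 j hj1)] at hci
      refine Or.inr (Or.inr (Or.inl ⟨hi1, hj1,
        ⟨hi1, hj1, hij, fun hm => hiK (mem_inter.mp hm).1,
          fun hm => hjK (mem_inter.mp hm).1, inter_subset_right⟩, ?_⟩))
      unfold FinMatroid.CI
      omega
    · exact Or.inl ⟨hi1, hj2⟩
    · exact Or.inr (Or.inl ⟨hi2, hj1⟩)
    · -- both in E₂
      rw [Finset.insert_inter_of_notMem (hd2 i hi2), Finset.insert_inter_of_mem hi2,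
          Finset.insert_inter_of_notMem (hd2 j hj2), Finset.insert_inter_of_mem hj2,
          Finset.insert_inter_of_notMem (hd2 i hi2),
          Finset.insert_inter_of_notMem (hd2 j hj2),
          Finset.insert_inter_of_mem hi2, Finset.insert_inter_of_mem hj2] at hci
      refine Or.inr (Or.inr (Or.inr ⟨hi2, hj2,
        ⟨hi2, hj2, hij, fun hm => hiK (mem_inter.mp hm).1,
          fun hm => hjK (mem_inter.mp hm).1, inter_subset_right⟩, ?_⟩))
      unfold FinMatroid.CI
      omega
  · rintro ⟨⟨hi, hj, hij, hiK, hjK, hK⟩, hcase⟩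
    refine ⟨⟨hi, hj, hij, hiK, hjK, hK⟩, ?_⟩
    simp only [FinMatroid.CI, FinMatroid.directSum]
    rcases hcase with ⟨hi1, hj2⟩ | ⟨hi2, hj1⟩ | ⟨hi1, hj1, _, hci⟩ | ⟨hi2, hj2, _, hci⟩
    · rw [Finset.insert_inter_of_mem hi1, Finset.insert_inter_of_notMem (hd1 i hi1),
          Finset.insert_inter_of_notMem (hd2 j hj2), Finset.insert_inter_of_mem hj2,
          Finset.insert_inter_of_mem hi1, Finset.insert_inter_of_notMem (hd2 j hj2),
          Finset.insert_inter_of_notMem (hd1 i hi1), Finset.insert_inter_of_mem hj2]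
      omega
    · rw [Finset.insert_inter_of_notMem (hd2 i hi2), Finset.insert_inter_of_mem hi2,
          Finset.insert_inter_of_mem hj1, Finset.insert_inter_of_notMem (hd1 j hj1),
          Finset.insert_inter_of_notMem (hd2 i hi2), Finset.insert_inter_of_mem hj1,
          Finset.insert_inter_of_mem hi2, Finset.insert_inter_of_notMem (hd1 j hj1)]
      omega
    · unfold FinMatroid.CI at hci
      rw [Finset.insert_inter_of_mem hi1, Finset.insert_inter_of_notMem (hd1 i hi1),
          Finset.insert_inter_of_mem hj1, Finset.insert_inter_of_notMem (hd1 j hj1),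
          Finset.insert_inter_of_mem hi1, Finset.insert_inter_of_mem hj1,
          Finset.insert_inter_of_notMem (hd1 i hi1),
          Finset.insert_inter_of_notMem (hd1 j hj1)]
      omega
    · unfold FinMatroid.CI at hci
      rw [Finset.insert_inter_of_notMem (hd2 i hi2), Finset.insert_inter_of_mem hi2,
          Finset.insert_inter_of_notMem (hd2 j hj2), Finset.insert_inter_of_mem hj2,
          Finset.insert_inter_of_notMem (hd2 i hi2),
          Finset.insert_inter_of_notMem (hd2 j hj2),
          Finset.insert_inter_of_mem hi2, Finset.insert_inter_of_mem hj2]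
      omega
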